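/- Under the trust bias click model, with α, β random variables in [0,1] determined by a random ranking, c a Bernoulli click with P(c = 1 | ranking) = α·R + β for relevance R ∈ [0,1], and a constant estimate R̂ ∈ [0,1], the variance satisfies Var(c − β − α·R̂) ≤ 2·(E[α] + E[β]). -/
import Mathlib


open Finset

noncomputable def expec {Ω : Type*} [Fintype Ω] (p : Ω → ℝ) (f : Ω → ℝ) : ℝ :=
  ∑ ω, p ω * f ω

noncomputable def vari {Ω : Type*} [Fintype Ω] (p : Ω → ℝ) (f : Ω → ℝ) : ℝ :=
  expec p (fun ω => (f ω - expec p f) ^ 2)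

lemma vari_le_expec_sq {Ω : Type*} [Fintype Ω] (p : Ω → ℝ) (f : Ω → ℝ)
    (hsum : ∑ ω, p ω = 1) :
    vari p f ≤ expec p (fun ω => f ω ^ 2) := by
  have key : vari p f
      = expec p (fun ω => f ω ^ 2) - (expec p f) ^ 2 := by
    unfold vari expec
    set E := ∑ ω, p ω * f ω with hE
    calc ∑ ω, p ω * (f ω - E) ^ 2
        = ∑ ω, (p ω * f ω ^ 2 - 2 * E * (p ω * f ω) + E ^ 2 * p ω) :=
          Finset.sum_congr rfl (fun ω _ => by ring)
      _ = (∑ ω, p ω * f ω ^ 2) - 2 * E * (∑ ω, p ω * f ω) + E ^ 2 * (∑ ω, p ω) := by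
          rw [Finset.sum_add_distrib, Finset.sum_sub_distrib, ← Finset.mul_sum,
            ← Finset.mul_sum]
      _ = (∑ ω, p ω * f ω ^ 2) - E ^ 2 := by rw [hsum, ← hE]; ring
  nlinarith [sq_nonneg (expec p f)]

/-- Key variance bound of Theorem 4.1: under the trust bias click model with
`P(c = 1 ∣ y) = α(y)·R + β(y)` and an estimate `R̂ ∈ [0,1]`,
`Var(c − β − α·R̂) ≤ 2·(E[α] + E[β])`. The joint space of rankings and clicks is
`Y × Bool` with mass `q (y, b) = p y · (click prob if b, else its complement)`. -/
theorem var_dr_residual_le {Y : Type*} [Fintype Y] (p : Y → ℝ)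
    (hp : ∀ y, 0 ≤ p y) (hsum : ∑ y, p y = 1)
    (α β : Y → ℝ) (R Rhat : ℝ)
    (hα : ∀ y, α y ∈ Set.Icc (0:ℝ) 1) (hβ : ∀ y, β y ∈ Set.Icc (0:ℝ) 1)
    (hR : R ∈ Set.Icc (0:ℝ) 1) (hRhat : Rhat ∈ Set.Icc (0:ℝ) 1)
    (hclick : ∀ y, α y * R + β y ∈ Set.Icc (0:ℝ) 1) :
    vari (fun z : Y × Bool =>
        p z.1 * (if z.2 then α z.1 * R + β z.1 else 1 - (α z.1 * R + β z.1)))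
      (fun z : Y × Bool => (if z.2 then (1:ℝ) else 0) - β z.1 - α z.1 * Rhat)
      ≤ 2 * (expec p α + expec p β) := by
  set q : Y × Bool → ℝ := fun z =>
    p z.1 * (if z.2 then α z.1 * R + β z.1 else 1 - (α z.1 * R + β z.1)) with hq
  set f : Y × Bool → ℝ := fun z =>
    (if z.2 then (1:ℝ) else 0) - β z.1 - α z.1 * Rhat with hf
  have hqsum : ∑ z, q z = 1 := by
    rw [Fintype.sum_prod_type]
    have : ∀ y : Y, ∑ b : Bool, q (y, b) = p y := by
      intro y
      simp [hq, Fintype.sum_bool]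
      ring
    simp only [this, hsum]
  have h1 : vari q f ≤ expec q (fun z => f z ^ 2) := vari_le_expec_sq q f hqsum
  refine h1.trans ?_
  have h2 : expec q (fun z => f z ^ 2)
      = ∑ y, p y * ((α y * R + β y) * (1 - β y - α y * Rhat) ^ 2
          + (1 - (α y * R + β y)) * (0 - β y - α y * Rhat) ^ 2) := by
    unfold expec
    rw [Fintype.sum_prod_type]
    refine Finset.sum_congr rfl fun y _ => ?_
    simp [hq, hf, Fintype.sum_bool]
    ring
  rw [h2]
  have h3 : 2 * (expec p α + expec p β) = ∑ y, p y * (2 * (α y + β y)) := by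
    unfold expec
    rw [← Finset.sum_add_distrib, Finset.mul_sum]
    exact Finset.sum_congr rfl fun y _ => by ring
  rw [h3]
  refine Finset.sum_le_sum fun y _ => ?_
  apply mul_le_mul_of_nonneg_left _ (hp y)
  obtain ⟨ha0, ha1⟩ := hα y
  obtain ⟨hb0, hb1⟩ := hβ y
  obtain ⟨hR0, hR1⟩ := hR
  obtain ⟨hRh0, hRh1⟩ := hRhat
  obtain ⟨hc0, hc1⟩ := hclick y
  set m := α y * R + β y with hm
  set t := β y + α y * Rhat with ht
  have ht0 : 0 ≤ t := add_nonneg hb0 (mul_nonneg ha0 hRh0)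
  have htab : t ≤ α y + β y := by nlinarith
  have ht2 : t ≤ 2 := by nlinarith
  have hmab : m ≤ α y + β y := by nlinarith
  have hgoal : m * (1 - t) ^ 2 + (1 - m) * t ^ 2 ≤ 2 * (α y + β y) := by
    rcases le_or_gt t 1 with h | h
    · nlinarith [mul_nonneg hc0 ht0, mul_nonneg ht0 (by linarith : (0:ℝ) ≤ 1 - t)]
    · nlinarith [mul_nonneg hc0 (by linarith : (0:ℝ) ≤ 2 * t - 1),
        mul_nonneg ht0 (by linarith : (0:ℝ) ≤ 2 - t)]
  calc m * (1 - β y - α y * Rhat) ^ 2 + (1 - m) * (0 - β y - α y * Rhat) ^ 2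
      = m * (1 - t) ^ 2 + (1 - m) * t ^ 2 := by ring
    _ ≤ 2 * (α y + β y) := hgoal
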